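/- Let S be a random walk on ℤ with i.i.d. integrable increments of zero mean. Then S is recurrent: almost surely S_n = 0 for infinitely many n (Chung–Fuchs theorem in dimension one for integer-valued walks). -/

import Mathlib

open MeasureTheory ProbabilityTheory Finset
open scoped ENNReal

namespace CFaux

set_option linter.unusedSectionVars false

variable {Ω : Type*} [MeasureSpace Ω] [IsProbabilityMeasure (ℙ : Measure Ω)]

/-- partial sum of increments: `T X k m ω = X k ω + ... + X (k+m-1) ω`. -/
def T (X : ℕ → Ω → ℤ) (k m : ℕ) (ω : Ω) : ℤ := ∑ i ∈ Finset.range m, X (k + i) ω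

/-- the tuple of increments `(X k, ..., X (k+m-1))`. -/
def V (X : ℕ → Ω → ℤ) (k m : ℕ) (ω : Ω) : Fin m → ℤ := fun i => X (k + i) ω

variable {X : ℕ → Ω → ℤ}

lemma measV (hXmeas : ∀ n, Measurable (X n)) (k m : ℕ) : Measurable (V X k m) :=
  measurable_pi_lambda _ fun i => hXmeas (k + i)

lemma measT (hXmeas : ∀ n, Measurable (X n)) (k m : ℕ) : Measurable (T X k m) :=
  Finset.measurable_sum _ fun i _ => hXmeas (k + i)

lemma Tsplit (k m l : ℕ) (ω : Ω) : T X k (m + l) ω = T X k m ω + T X (k + m) l ω := by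
  unfold T
  rw [Finset.sum_range_add]
  simp [add_assoc]

end CFaux

namespace CFaux
variable {Ω : Type*} [MeasureSpace Ω] [IsProbabilityMeasure (ℙ : Measure Ω)] {X : ℕ → Ω → ℤ}

lemma prob_tuple (hXmeas : ∀ n, Measurable (X n))
    (hXindep : iIndepFun X ℙ)
    (hXident : ∀ n, IdentDistrib (X n) (X 0) ℙ ℙ)
    (k m : ℕ) (v : Fin m → ℤ) :
    ℙ (V X k m ⁻¹' {v}) = ∏ i : Fin m, ℙ (X 0 ⁻¹' {v i}) := by
  classical
  set S : Finset ℕ := (Finset.range m).image (fun i => k + i) with hS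
  set sets : ℕ → Set ℤ := fun j => if h : k ≤ j ∧ j - k < m then {v ⟨j - k, h.2⟩} else Set.univ
    with hsets
  have hpre : V X k m ⁻¹' {v} = ⋂ j ∈ S, X j ⁻¹' sets j := by
    ext ω
    simp only [Set.mem_preimage, Set.mem_singleton_iff, Set.mem_iInter, hS, Finset.mem_image,
      Finset.mem_range, funext_iff]
    constructor
    · rintro h j ⟨i, hi, rfl⟩
      have hcond : k ≤ k + i ∧ k + i - k < m := ⟨Nat.le_add_right _ _, by omega⟩
      simp only [hsets, dif_pos hcond, Set.mem_preimage, Set.mem_singleton_iff]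
      have : (⟨k + i - k, hcond.2⟩ : Fin m) = ⟨i, hi⟩ := by ext; simp
      rw [this]
      exact h ⟨i, hi⟩
    · intro h i
      have := h (k + i) ⟨i, i.2, rfl⟩
      have hcond : k ≤ k + i ∧ k + (i:ℕ) - k < m := ⟨Nat.le_add_right _ _, by omega⟩
      simp only [hsets, dif_pos hcond, Set.mem_preimage, Set.mem_singleton_iff] at this
      have h2 : (⟨k + (i:ℕ) - k, hcond.2⟩ : Fin m) = i := by ext; simp
      rwa [h2] at this
  rw [hpre, hXindep.measure_inter_preimage_eq_mul S (fun j _ => (sets j).to_countable.measurableSet)]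
  rw [hS, Finset.prod_image (by intro a _ b _ h; exact Nat.add_left_cancel h)]
  rw [← Fin.prod_univ_eq_prod_range (fun j => ℙ (X (k + j) ⁻¹' sets (k + j))) m]
  apply Finset.prod_congr rfl
  intro i _
  have hcond : k ≤ k + (i:ℕ) ∧ k + (i:ℕ) - k < m := ⟨Nat.le_add_right _ _, by omega⟩
  have h2 : (⟨k + (i:ℕ) - k, hcond.2⟩ : Fin m) = i := by ext; simp
  simp only [hsets, dif_pos hcond, h2]
  exact (hXident (k + i)).measure_mem_eq (measurableSet_singleton (v i))

end CFaux

namespace CFaux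
variable {Ω : Type*} [MeasureSpace Ω] [IsProbabilityMeasure (ℙ : Measure Ω)] {X : ℕ → Ω → ℤ}

lemma measV_shift (hXmeas : ∀ n, Measurable (X n))
    (hXindep : iIndepFun X ℙ)
    (hXident : ∀ n, IdentDistrib (X n) (X 0) ℙ ℙ)
    (k m : ℕ) (t : Set (Fin m → ℤ)) :
    ℙ (V X k m ⁻¹' t) = ℙ (V X 0 m ⁻¹' t) := by
  have hmap : Measure.map (V X k m) ℙ = Measure.map (V X 0 m) ℙ := by
    apply MeasureTheory.Measure.ext_of_singleton
    intro v
    rw [Measure.map_apply (measV hXmeas k m) (measurableSet_singleton v),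
      Measure.map_apply (measV hXmeas 0 m) (measurableSet_singleton v),
      prob_tuple hXmeas hXindep hXident k m v, prob_tuple hXmeas hXindep hXident 0 m v]
  have h1 := Measure.map_apply (measV hXmeas k m) (t.to_countable.measurableSet) (μ := ℙ)
  have h2 := Measure.map_apply (measV hXmeas 0 m) (t.to_countable.measurableSet) (μ := ℙ)
  rw [← h1, ← h2, hmap]

lemma indepV (hXmeas : ∀ n, Measurable (X n))
    (hXindep : iIndepFun X ℙ)
    (k m : ℕ) : IndepFun (V X 0 k) (V X k m) ℙ := by
  classical
  set S : Finset ℕ := Finset.range k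
  set Tt : Finset ℕ := (Finset.range m).image (fun i => k + i)
  have hST : Disjoint S Tt := by
    simp only [Finset.disjoint_left, S, Tt, Finset.mem_range, Finset.mem_image]
    rintro a ha ⟨i, _, rfl⟩; omega
  have h := hXindep.indepFun_finset S Tt hST hXmeas
  have h2 := h.comp (φ := fun g : {x // x ∈ S} → ℤ => fun i : Fin k => g ⟨i, by
      simpa [S] using i.2⟩)
    (ψ := fun g : {x // x ∈ Tt} → ℤ => fun i : Fin m => g ⟨k + i, by
      simp only [Tt, Finset.mem_image, Finset.mem_range]; exact ⟨i, i.2, rfl⟩⟩)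
    (measurable_of_countable _) (measurable_of_countable _)
  convert h2 using 1
  all_goals (funext ω i; simp [V, Function.comp])

variable (X) in
/-- partial sums of a tuple -/
def pS {m : ℕ} (v : Fin m → ℤ) (j : ℕ) : ℤ :=
  ∑ i ∈ Finset.range j, if h : i < m then v ⟨i, h⟩ else 0

lemma pS_eq (k m j : ℕ) (hj : j ≤ m) (ω : Ω) : pS (V X k m ω) j = T X k j ω := by
  unfold pS T V
  apply Finset.sum_congr rfl
  intro i hi
  rw [dif_pos (lt_of_lt_of_le (Finset.mem_range.1 hi) hj)]

lemma key (hXmeas : ∀ n, Measurable (X n))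
    (hXindep : iIndepFun X ℙ)
    (hXident : ∀ n, IdentDistrib (X n) (X 0) ℙ ℙ)
    (k m : ℕ) (s : Set (Fin k → ℤ)) (t : Set (Fin m → ℤ)) :
    ℙ (V X 0 k ⁻¹' s ∩ V X k m ⁻¹' t) = ℙ (V X 0 k ⁻¹' s) * ℙ (V X 0 m ⁻¹' t) := by
  rw [(indepV hXmeas hXindep k m).measure_inter_preimage_eq_mul s t
    s.to_countable.measurableSet t.to_countable.measurableSet,
    measV_shift hXmeas hXindep hXident k m t]

/-- first visit of the partial-sum walk to `x` at time `k` (among times `≥ 1`) -/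
def Fset (X : ℕ → Ω → ℤ) (x : ℤ) (k : ℕ) : Set Ω :=
  {ω | T X 0 k ω = x ∧ ∀ j, 0 < j → j < k → T X 0 j ω ≠ x}

lemma Fset_eq_preimage (x : ℤ) (k : ℕ) :
    Fset X x k = V X 0 k ⁻¹' {v | pS v k = x ∧ ∀ j, 0 < j → j < k → pS v j ≠ x} := by
  ext ω
  simp only [Fset, Set.mem_setOf_eq, Set.mem_preimage]
  have h1 : pS (V X 0 k ω) k = T X 0 k ω := pS_eq 0 k k le_rfl ω
  have h2 : ∀ j, j < k → pS (V X 0 k ω) j = T X 0 j ω := fun j hj => pS_eq 0 k j hj.le ω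
  constructor
  · rintro ⟨ha, hb⟩
    exact ⟨by rw [h1]; exact ha, fun j hj hjk => by rw [h2 j hjk]; exact hb j hj hjk⟩
  · rintro ⟨ha, hb⟩
    exact ⟨by rw [← h1]; exact ha, fun j hj hjk => by rw [← h2 j hjk]; exact hb j hj hjk⟩

lemma measFset (hXmeas : ∀ n, Measurable (X n)) (x : ℤ) (k : ℕ) :
    MeasurableSet (Fset X x k) := by
  rw [Fset_eq_preimage]
  exact (measV hXmeas 0 k) (Set.to_countable _).measurableSet

lemma hTm (k m : ℕ) : {ω | T X k m ω = 0} = V X k m ⁻¹' {v | pS v m = 0} := by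
  ext ω
  simp only [Set.mem_setOf_eq, Set.mem_preimage, pS_eq k m m le_rfl ω]

lemma decomp (hXmeas : ∀ n, Measurable (X n))
    (hXindep : iIndepFun X ℙ)
    (hXident : ∀ n, IdentDistrib (X n) (X 0) ℙ ℙ)
    (x : ℤ) (n : ℕ) (hn : 1 ≤ n) :
    ℙ {ω | T X 0 n ω = x}
      = ∑ k ∈ Finset.Icc 1 n, ℙ (Fset X x k) * ℙ {ω | T X 0 (n - k) ω = 0} := by
  have hsets : {ω | T X 0 n ω = x}
      = ⋃ k ∈ Finset.Icc 1 n, (Fset X x k ∩ {ω | T X k (n - k) ω = 0}) := by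
    ext ω
    simp only [Set.mem_setOf_eq, Set.mem_iUnion, Finset.mem_Icc, Set.mem_inter_iff]
    constructor
    · intro hx
      have hex : ∃ j, 0 < j ∧ j ≤ n ∧ T X 0 j ω = x := ⟨n, hn, le_rfl, hx⟩
      classical
      have hj0 := Nat.find_spec hex
      refine ⟨Nat.find hex, ⟨?_, ?_⟩, ⟨?_, ?_⟩, ?_⟩
      · exact hj0.1
      · exact hj0.2.1
      · exact hj0.2.2
      · intro j hj hjlt hcon
        exact Nat.find_min hex hjlt ⟨hj, le_trans (le_of_lt hjlt) hj0.2.1, hcon⟩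
      · have hsplit := Tsplit (X := X) 0 (Nat.find hex) (n - Nat.find hex) ω
        rw [Nat.add_sub_cancel' hj0.2.1, Nat.zero_add] at hsplit
        have : T X 0 (Nat.find hex) ω = x := hj0.2.2
        omega
    · rintro ⟨k, ⟨hk1, hkn⟩, ⟨hTk, _⟩, hT0⟩
      have hsplit := Tsplit (X := X) 0 k (n - k) ω
      rw [Nat.add_sub_cancel' hkn, Nat.zero_add] at hsplit
      omega
  rw [hsets]
  rw [measure_biUnion_finset ?hd ?hm]
  case hd =>
    intro a ha b hb hab
    simp only [Finset.coe_Icc, Set.mem_Icc] at ha hb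
    rcases lt_or_gt_of_ne hab with h | h
    · apply Set.disjoint_left.2
      rintro ω ⟨⟨hTa, _⟩, _⟩ ⟨⟨_, hbmin⟩, _⟩
      exact hbmin a ha.1 h hTa
    · apply Set.disjoint_left.2
      rintro ω ⟨⟨_, hamin⟩, _⟩ ⟨⟨hTb, _⟩, _⟩
      exact hamin b hb.1 h hTb
  case hm =>
    intro k _
    exact (measFset hXmeas x k).inter ((measT hXmeas k (n - k)) (measurableSet_singleton 0))
  apply Finset.sum_congr rfl
  intro k _
  rw [Fset_eq_preimage, hTm, key hXmeas hXindep hXident, ← hTm 0 (n - k), ← Fset_eq_preimage]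

lemma double_sum (N : ℕ) (g : ℕ → ℕ → ℝ≥0∞) :
    ∑ n ∈ Finset.Icc 1 N, ∑ k ∈ Finset.Icc 1 n, g k (n - k)
      = ∑ k ∈ Finset.Icc 1 N, ∑ m ∈ Finset.range (N + 1 - k), g k m := by
  induction N with
  | zero => simp
  | succ N ih =>
    have h1 : ∀ k ∈ Finset.Icc 1 N, ∑ m ∈ Finset.range (N + 1 + 1 - k), g k m
        = ∑ m ∈ Finset.range (N + 1 - k), g k m + g k (N + 1 - k) := by
      intro k hk
      simp only [Finset.mem_Icc] at hk
      have h : N + 1 + 1 - k = (N + 1 - k) + 1 := by omega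
      rw [h, Finset.sum_range_succ]
    have h2 : N + 1 + 1 - (N + 1) = 1 := by omega
    rw [Finset.sum_Icc_succ_top (by omega : 1 ≤ N + 1), ih,
      Finset.sum_Icc_succ_top (by omega : 1 ≤ N + 1)
        (f := fun k => ∑ m ∈ Finset.range (N + 1 + 1 - k), g k m),
      Finset.sum_congr rfl h1, Finset.sum_add_distrib,
      Finset.sum_Icc_succ_top (by omega : 1 ≤ N + 1) (f := fun k => g k (N + 1 - k)), h2]
    simp only [Finset.sum_range_one, Nat.sub_self]
    abel

lemma Fset_pairwise_disjoint (x : ℤ) {a b : ℕ} (ha : 0 < a) (hb : 0 < b) (hab : a ≠ b) :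
    Disjoint (Fset X x a) (Fset X x b) := by
  rcases lt_or_gt_of_ne hab with h | h
  · apply Set.disjoint_left.2
    rintro ω ⟨hTa, _⟩ ⟨_, hbmin⟩
    exact hbmin a ha h hTa
  · apply Set.disjoint_left.2
    rintro ω ⟨_, hamin⟩ ⟨hTb, _⟩
    exact hamin b hb h hTb

/-- set of paths that visit `x` at some positive time -/
def Rset (X : ℕ → Ω → ℤ) (x : ℤ) : Set Ω := {ω | ∃ k, 0 < k ∧ T X 0 k ω = x}

lemma Fsum_le (hXmeas : ∀ n, Measurable (X n)) (x : ℤ) (N : ℕ) :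
    ∑ k ∈ Finset.Icc 1 N, ℙ (Fset X x k) ≤ ℙ (Rset X x) := by
  rw [← measure_biUnion_finset ?hd (fun k _ => measFset hXmeas x k)]
  case hd =>
    intro a ha b hb hab
    simp only [Finset.coe_Icc, Set.mem_Icc] at ha hb
    exact Fset_pairwise_disjoint x ha.1 hb.1 hab
  apply measure_mono
  intro ω hω
  simp only [Set.mem_iUnion, Finset.mem_Icc] at hω
  obtain ⟨k, ⟨hk1, _⟩, hT, _⟩ := hω
  exact ⟨k, hk1, hT⟩

lemma conv_bound (hXmeas : ∀ n, Measurable (X n))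
    (hXindep : iIndepFun X ℙ)
    (hXident : ∀ n, IdentDistrib (X n) (X 0) ℙ ℙ)
    (x : ℤ) (N : ℕ) :
    ∑ n ∈ Finset.Icc 1 N, ℙ {ω | T X 0 n ω = x}
      ≤ ℙ (Rset X x) * ∑ n ∈ Finset.range (N + 1), ℙ {ω | T X 0 n ω = 0} := by
  calc ∑ n ∈ Finset.Icc 1 N, ℙ {ω | T X 0 n ω = x}
      = ∑ n ∈ Finset.Icc 1 N, ∑ k ∈ Finset.Icc 1 n,
          ℙ (Fset X x k) * ℙ {ω | T X 0 (n - k) ω = 0} := by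
        apply Finset.sum_congr rfl
        intro n hn
        exact decomp hXmeas hXindep hXident x n (Finset.mem_Icc.1 hn).1
    _ = ∑ k ∈ Finset.Icc 1 N, ∑ m ∈ Finset.range (N + 1 - k),
          ℙ (Fset X x k) * ℙ {ω | T X 0 m ω = 0} :=
        double_sum N (fun k m => ℙ (Fset X x k) * ℙ {ω | T X 0 m ω = 0})
    _ = ∑ k ∈ Finset.Icc 1 N,
          ℙ (Fset X x k) * ∑ m ∈ Finset.range (N + 1 - k), ℙ {ω | T X 0 m ω = 0} := by
        apply Finset.sum_congr rfl
        intro k _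
        rw [Finset.mul_sum]
    _ ≤ ∑ k ∈ Finset.Icc 1 N,
          ℙ (Fset X x k) * ∑ m ∈ Finset.range (N + 1), ℙ {ω | T X 0 m ω = 0} := by
        apply Finset.sum_le_sum
        intro k _
        exact mul_le_mul_right (Finset.sum_le_sum_of_subset
          (Finset.range_subset_range.2 (by omega))) _
    _ = (∑ k ∈ Finset.Icc 1 N, ℙ (Fset X x k))
          * ∑ m ∈ Finset.range (N + 1), ℙ {ω | T X 0 m ω = 0} := by
        rw [Finset.sum_mul]
    _ ≤ ℙ (Rset X x) * ∑ n ∈ Finset.range (N + 1), ℙ {ω | T X 0 n ω = 0} :=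
        mul_le_mul_left (Fsum_le hXmeas x N) _

lemma G_split (f : ℕ → ℝ≥0∞) (N : ℕ) :
    ∑ n ∈ Finset.range (N + 1), f n = f 0 + ∑ n ∈ Finset.Icc 1 N, f n := by
  have h : Finset.range (N + 1) = insert 0 (Finset.Icc 1 N) := by
    ext i; simp [Finset.mem_range, Finset.mem_Icc]; omega
  rw [h, Finset.sum_insert (by simp)]

lemma T00_prob : ℙ {ω | T X 0 0 ω = 0} = 1 := by
  have : {ω : Ω | T X 0 0 ω = 0} = Set.univ := by
    ext ω; simp [T]
  rw [this, measure_univ]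

lemma wlln (hXmeas : ∀ n, Measurable (X n))
    (hXindep : iIndepFun X ℙ)
    (hXident : ∀ n, IdentDistrib (X n) (X 0) ℙ ℙ)
    (hint : Integrable (fun ω => ((X 0 ω : ℤ) : ℝ)) ℙ)
    (hmean : ∫ ω, ((X 0 ω : ℤ) : ℝ) ∂ℙ = 0)
    {ε : ℝ} (hε : 0 < ε) :
    ∃ n0 : ℕ, 1 ≤ n0 ∧ ∀ n, n0 ≤ n →
      (2 : ℝ≥0∞)⁻¹ ≤ ℙ {ω | |((T X 0 n ω : ℤ) : ℝ)| < ε * n} := by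
  set Y : ℕ → Ω → ℝ := fun n ω => ((X n ω : ℤ) : ℝ) with hY
  have hYmeas : ∀ n, Measurable (Y n) :=
    fun n => (measurable_of_countable (fun z : ℤ => (z : ℝ))).comp (hXmeas n)
  have hslln := strong_law_ae_real Y hint
    (fun i j hij => ((hXindep.indepFun hij).comp
      (measurable_of_countable (fun z : ℤ => (z : ℝ)))
      (measurable_of_countable (fun z : ℤ => (z : ℝ)))))
    (fun i => (hXident i).comp (measurable_of_countable (fun z : ℤ => (z : ℝ))))
  rw [hmean] at hslln
  set W : ℕ → Ω → ℝ := fun n ω => (∑ i ∈ Finset.range n, Y i ω) / n with hW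
  have hWmeas : ∀ n, Measurable (W n) :=
    fun n => (Finset.measurable_sum _ fun i _ => hYmeas i).div_const _
  have htim : TendstoInMeasure ℙ W Filter.atTop (fun _ => (0 : ℝ)) :=
    tendstoInMeasure_of_tendsto_ae (fun n => (hWmeas n).aestronglyMeasurable) hslln
  have h2 := htim (ENNReal.ofReal ε) (ENNReal.ofReal_pos.2 hε)
  have hev : ∀ᶠ n in Filter.atTop, ℙ {x | ε ≤ dist (W n x) 0} < 2⁻¹ := by
    have h3 := h2.eventually_lt_const (by norm_num : (0:ℝ≥0∞) < 2⁻¹)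
    filter_upwards [h3] with n hn
    have hs : {x | ε ≤ dist (W n x) 0}
        = {x | ENNReal.ofReal ε ≤ edist (W n x) ((fun _ => (0:ℝ)) x)} := by
      ext x
      simp only [Set.mem_setOf_eq, edist_dist, ENNReal.ofReal_le_ofReal_iff dist_nonneg]
    rw [hs]; exact hn
  obtain ⟨n1, hn1⟩ := Filter.eventually_atTop.1 hev
  refine ⟨max n1 1, le_max_right _ _, fun n hn => ?_⟩
  have hn1' : n1 ≤ n := le_trans (le_max_left _ _) hn
  have hnpos : (1 : ℕ) ≤ n := le_trans (le_max_right _ _) hn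
  have hlt := hn1 n hn1'
  have hcompl : ℙ {x | ε ≤ dist (W n x) 0}ᶜ
      = 1 - ℙ {x | ε ≤ dist (W n x) 0} :=
    prob_compl_eq_one_sub (measurableSet_le measurable_const ((hWmeas n).dist measurable_const))
  have hhalf : (2 : ℝ≥0∞)⁻¹ ≤ ℙ {x | ε ≤ dist (W n x) 0}ᶜ := by
    rw [hcompl]
    calc (2 : ℝ≥0∞)⁻¹ = 1 - 2⁻¹ := by rw [ENNReal.one_sub_inv_two]
    _ ≤ 1 - ℙ {x | ε ≤ dist (W n x) 0} := tsub_le_tsub_left hlt.le _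
  refine le_trans hhalf (measure_mono ?_)
  intro ω hω
  simp only [Set.mem_compl_iff, Set.mem_setOf_eq, not_le, Real.dist_0_eq_abs] at hω ⊢
  have hTcast : ((T X 0 n ω : ℤ) : ℝ) = ∑ i ∈ Finset.range n, Y i ω := by
    simp only [T, hY, zero_add]
    push_cast
    rfl
  have hnR : (0 : ℝ) < n := by exact_mod_cast hnpos
  rw [hTcast]
  have := hω
  rw [hW] at this
  simp only at this
  rw [abs_div, abs_of_pos hnR] at this
  calc |∑ i ∈ Finset.range n, Y i ω| = (|∑ i ∈ Finset.range n, Y i ω| / n) * n := by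
        field_simp
  _ < ε * n := by
        apply mul_lt_mul_of_pos_right _ hnR
        exact this

lemma count_bound (hXmeas : ∀ n, Measurable (X n))
    (hXindep : iIndepFun X ℙ)
    (hXident : ∀ n, IdentDistrib (X n) (X 0) ℙ ℙ)
    {ε : ℝ} (hε : 0 < ε) {n0 : ℕ} (hn01 : 1 ≤ n0)
    (hwlln : ∀ n, n0 ≤ n → (2 : ℝ≥0∞)⁻¹ ≤ ℙ {ω | |((T X 0 n ω : ℤ) : ℝ)| < ε * n})
    (N : ℕ) (hN : n0 ≤ N) :
    ((N + 1 - n0 : ℕ) : ℝ≥0∞) * 2⁻¹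
      ≤ ((Finset.Icc (-(⌈ε * N⌉)) ⌈ε * N⌉).card : ℝ≥0∞)
        * ∑ n ∈ Finset.range (N + 1), ℙ {ω | T X 0 n ω = 0} := by
  classical
  set B : ℤ := ⌈ε * N⌉ with hB
  calc ((N + 1 - n0 : ℕ) : ℝ≥0∞) * 2⁻¹
      = ∑ n ∈ Finset.Icc n0 N, (2 : ℝ≥0∞)⁻¹ := by
        rw [Finset.sum_const, Nat.card_Icc, nsmul_eq_mul]
    _ ≤ ∑ n ∈ Finset.Icc n0 N, ℙ {ω | |((T X 0 n ω : ℤ) : ℝ)| < ε * n} :=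
        Finset.sum_le_sum fun n hn => hwlln n (Finset.mem_Icc.1 hn).1
    _ ≤ ∑ n ∈ Finset.Icc n0 N, ℙ {ω | T X 0 n ω ∈ Finset.Icc (-B) B} := by
        apply Finset.sum_le_sum
        intro n hn
        apply measure_mono
        intro ω hω
        simp only [Set.mem_setOf_eq] at hω ⊢
        rw [Finset.mem_Icc]
        have hnN : (n : ℝ) ≤ N := by exact_mod_cast (Finset.mem_Icc.1 hn).2
        have habs : |((T X 0 n ω : ℤ) : ℝ)| ≤ ε * N :=
          le_trans hω.le (by nlinarith)
        have h1 : ((T X 0 n ω : ℤ) : ℝ) ≤ (B : ℝ) :=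
          le_trans (le_trans (le_abs_self _) habs) (Int.le_ceil _)
        have h2 : ((-B : ℤ) : ℝ) ≤ ((T X 0 n ω : ℤ) : ℝ) := by
          push_cast
          have := neg_abs_le ((T X 0 n ω : ℤ) : ℝ)
          have h3 := Int.le_ceil (ε * N)
          nlinarith [abs_nonneg ((T X 0 n ω : ℤ) : ℝ)]
        exact ⟨by exact_mod_cast h2, by exact_mod_cast h1⟩
    _ = ∑ n ∈ Finset.Icc n0 N, ∑ x ∈ Finset.Icc (-B) B, ℙ {ω | T X 0 n ω = x} := by
        apply Finset.sum_congr rfl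
        intro n _
        have hset : {ω | T X 0 n ω ∈ Finset.Icc (-B) B}
            = ⋃ x ∈ Finset.Icc (-B) B, {ω | T X 0 n ω = x} := by
          ext ω
          simp only [Set.mem_setOf_eq, Set.mem_iUnion]
          exact ⟨fun h => ⟨_, h, rfl⟩, fun ⟨x, hx, h⟩ => h ▸ hx⟩
        rw [hset, measure_biUnion_finset]
        · intro a _ b _ hab
          apply Set.disjoint_left.2
          rintro ω h1 h2
          simp only [Set.mem_setOf_eq] at h1 h2
          exact hab (h1 ▸ h2 ▸ rfl)
        · intro x _
          exact (measT hXmeas 0 n) (measurableSet_singleton x)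
    _ = ∑ x ∈ Finset.Icc (-B) B, ∑ n ∈ Finset.Icc n0 N, ℙ {ω | T X 0 n ω = x} :=
        Finset.sum_comm
    _ ≤ ∑ x ∈ Finset.Icc (-B) B, ∑ n ∈ Finset.Icc 1 N, ℙ {ω | T X 0 n ω = x} := by
        apply Finset.sum_le_sum
        intro x _
        apply Finset.sum_le_sum_of_subset
        apply Finset.Icc_subset_Icc_left hn01
    _ ≤ ∑ x ∈ Finset.Icc (-B) B,
          ℙ (Rset X x) * ∑ n ∈ Finset.range (N + 1), ℙ {ω | T X 0 n ω = 0} :=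
        Finset.sum_le_sum fun x _ => conv_bound hXmeas hXindep hXident x N
    _ ≤ ∑ x ∈ Finset.Icc (-B) B,
          ∑ n ∈ Finset.range (N + 1), ℙ {ω | T X 0 n ω = 0} :=
        Finset.sum_le_sum fun x _ => by
          calc ℙ (Rset X x) * ∑ n ∈ Finset.range (N + 1), ℙ {ω | T X 0 n ω = 0}
              ≤ 1 * ∑ n ∈ Finset.range (N + 1), ℙ {ω | T X 0 n ω = 0} :=
                mul_le_mul_left prob_le_one _
          _ = _ := one_mul _
    _ = ((Finset.Icc (-B) B).card : ℝ≥0∞)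
          * ∑ n ∈ Finset.range (N + 1), ℙ {ω | T X 0 n ω = 0} := by
        rw [Finset.sum_const, nsmul_eq_mul]

lemma measRset (hXmeas : ∀ n, Measurable (X n)) (x : ℤ) : MeasurableSet (Rset X x) := by
  have h : Rset X x = ⋃ k, ⋃ (_ : 0 < k), {ω | T X 0 k ω = x} := by
    ext ω
    simp only [Rset, Set.mem_setOf_eq, Set.mem_iUnion]
    exact ⟨fun ⟨k, h1, h2⟩ => ⟨k, h1, h2⟩, fun ⟨k, h1, h2⟩ => ⟨k, h1, h2⟩⟩
  rw [h]
  exact MeasurableSet.iUnion fun k => MeasurableSet.iUnion fun _ =>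
    (measT hXmeas 0 k) (measurableSet_singleton x)

lemma r_eq_one (hXmeas : ∀ n, Measurable (X n))
    (hXindep : iIndepFun X ℙ)
    (hXident : ∀ n, IdentDistrib (X n) (X 0) ℙ ℙ)
    (hint : Integrable (fun ω => ((X 0 ω : ℤ) : ℝ)) ℙ)
    (hmean : ∫ ω, ((X 0 ω : ℤ) : ℝ) ∂ℙ = 0) :
    ℙ (Rset X 0) = 1 := by
  by_contra hr
  have hrlt : ℙ (Rset X 0) < 1 := lt_of_le_of_ne prob_le_one hr
  set r : ℝ≥0∞ := ℙ (Rset X 0) with hrdef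
  set G : ℕ → ℝ≥0∞ := fun N => ∑ n ∈ Finset.range (N + 1), ℙ {ω | T X 0 n ω = 0} with hGdef
  have hGtop : ∀ N, G N ≠ ⊤ := by
    intro N
    exact (ENNReal.sum_lt_top.2 fun _ _ => measure_lt_top ℙ _).ne
  have hGren : ∀ N, G N ≤ 1 + r * G N := by
    intro N
    calc G N = ℙ {ω | T X 0 0 ω = 0} + ∑ n ∈ Finset.Icc 1 N, ℙ {ω | T X 0 n ω = 0} :=
          G_split _ N
    _ = 1 + ∑ n ∈ Finset.Icc 1 N, ℙ {ω | T X 0 n ω = 0} := by rw [T00_prob]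
    _ ≤ 1 + r * G N := add_le_add_right (conv_bound hXmeas hXindep hXident 0 N) 1
  set r' : ℝ := r.toReal with hr'def
  have hr'lt : r' < 1 := by
    rw [hr'def]
    have := (ENNReal.toReal_lt_toReal (measure_ne_top ℙ (Rset X 0)) ENNReal.one_ne_top).2 hrlt
    simpa using this
  have hr'0 : 0 ≤ r' := ENNReal.toReal_nonneg
  set g : ℕ → ℝ := fun N => (G N).toReal with hgdef
  have hg0 : ∀ N, 0 ≤ g N := fun N => ENNReal.toReal_nonneg
  have hgle : ∀ N, g N ≤ 1 + r' * g N := by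
    intro N
    have h1 : (1 : ℝ≥0∞) + r * G N ≠ ⊤ :=
      ENNReal.add_ne_top.2 ⟨ENNReal.one_ne_top,
        ENNReal.mul_ne_top (measure_ne_top ℙ _) (hGtop N)⟩
    have h2 := (ENNReal.toReal_le_toReal (hGtop N) h1).2 (hGren N)
    rwa [ENNReal.toReal_add ENNReal.one_ne_top
      (ENNReal.mul_ne_top (measure_ne_top ℙ _) (hGtop N)),
      ENNReal.toReal_mul, ENNReal.toReal_one] at h2
  have h1r : 0 < 1 - r' := by linarith
  set C : ℝ := (1 - r')⁻¹ with hCdef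
  have hC0 : 0 < C := inv_pos.2 h1r
  have hgC : ∀ N, g N ≤ C := by
    intro N
    have h := hgle N
    rw [hCdef, inv_eq_one_div, le_div_iff₀ h1r]
    nlinarith
  set ε : ℝ := 1 / (16 * (C + 1)) with hεdef
  have hε : 0 < ε := by
    rw [hεdef]
    positivity
  obtain ⟨n0, hn01, hwlln⟩ := wlln hXmeas hXindep hXident hint hmean hε
  obtain ⟨N, hNgt⟩ := exists_nat_gt (max (n0 : ℝ) (8 * ((n0 : ℝ) + 3 * C + 1)))
  have hNn0 : n0 ≤ N := by
    have := lt_of_le_of_lt (le_max_left (n0:ℝ) _) hNgt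
    exact_mod_cast this.le
  have hNbig : (N : ℝ) > 8 * ((n0 : ℝ) + 3 * C + 1) :=
    lt_of_le_of_lt (le_max_right _ _) hNgt
  have hcount := count_bound hXmeas hXindep hXident hε hn01 hwlln N hNn0
  set B : ℤ := ⌈ε * N⌉ with hBdef
  have hB0 : 0 ≤ B := Int.ceil_nonneg (by positivity)
  -- convert to real
  have hcard : ((Finset.Icc (-B) B).card : ℝ) = 2 * (B : ℝ) + 1 := by
    rw [Int.card_Icc]
    have h : (B + 1 - -B) = 2 * B + 1 := by ring
    rw [h]
    have h2 : (((2 * B + 1).toNat : ℤ) : ℝ) = ((2 * B + 1 : ℤ) : ℝ) := by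
      rw [Int.toNat_of_nonneg (by omega)]
    have h3 : (((2 * B + 1).toNat : ℕ) : ℝ) = (((2 * B + 1).toNat : ℤ) : ℝ) := by
      push_cast
      ring
    rw [h3, h2]
    push_cast
    ring
  have hLHS : ((N + 1 - n0 : ℕ) : ℝ≥0∞) * 2⁻¹ ≠ ⊤ := by
    exact ENNReal.mul_ne_top (ENNReal.natCast_ne_top _) (by norm_num)
  have hRHS : ((Finset.Icc (-B) B).card : ℝ≥0∞) * G N ≠ ⊤ :=
    ENNReal.mul_ne_top (ENNReal.natCast_ne_top _) (hGtop N)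
  have hreal := (ENNReal.toReal_le_toReal hLHS hRHS).2 hcount
  rw [ENNReal.toReal_mul, ENNReal.toReal_mul] at hreal
  simp only [ENNReal.toReal_natCast] at hreal
  have h2inv : ((2 : ℝ≥0∞)⁻¹).toReal = (2 : ℝ)⁻¹ := by
    rw [ENNReal.toReal_inv]
    norm_num
  rw [h2inv] at hreal
  -- hreal : (N + 1 - n0 : ℕ) * 2⁻¹ ≤ card * g N
  have hsub : ((N + 1 - n0 : ℕ) : ℝ) = (N : ℝ) + 1 - (n0 : ℝ) := by
    have : n0 ≤ N + 1 := by omega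
    push_cast [Nat.cast_sub this]
    ring
  rw [hsub, hcard] at hreal
  have hBle : (B : ℝ) ≤ ε * N + 1 := (Int.ceil_lt_add_one _).le
  have hgCN := hgC N
  have hgN0 := hg0 N
  -- key: ε * (C + 1) * 16 = 1
  have hεkey : ε * (16 * (C + 1)) = 1 := by
    rw [hεdef]
    field_simp
  have hN0 : (0 : ℝ) ≤ N := Nat.cast_nonneg N
  have h4εC : 4 * (ε * C) ≤ 1 / 4 := by nlinarith
  have hfinal : ((N : ℝ) + 1 - n0) * 2⁻¹ ≤ (2 * (ε * N + 1) + 1) * C := by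
    calc ((N : ℝ) + 1 - n0) * 2⁻¹ ≤ (2 * (B : ℝ) + 1) * g N := hreal
    _ ≤ (2 * (ε * N + 1) + 1) * C := by nlinarith
  nlinarith [mul_le_mul_of_nonneg_left h4εC hN0]

lemma no_return_null (hXmeas : ∀ n, Measurable (X n))
    (hXindep : iIndepFun X ℙ)
    (hXident : ∀ n, IdentDistrib (X n) (X 0) ℙ ℙ)
    (hint : Integrable (fun ω => ((X 0 ω : ℤ) : ℝ)) ℙ)
    (hmean : ∫ ω, ((X 0 ω : ℤ) : ℝ) ∂ℙ = 0)
    (j : ℕ) :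
    ℙ {ω | ∀ k, 0 < k → T X j k ω ≠ 0} = 0 := by
  set Z0 : ℕ → Set Ω := fun M => {ω | ∀ k, 0 < k → k ≤ M → T X 0 k ω ≠ 0} with hZ0
  have hpre : ∀ (i M : ℕ), {ω : Ω | ∀ k, 0 < k → k ≤ M → T X i k ω ≠ 0}
      = V X i M ⁻¹' {v | ∀ k, 0 < k → k ≤ M → pS v k ≠ 0} := by
    intro i M
    ext ω
    simp only [Set.mem_setOf_eq, Set.mem_preimage]
    constructor
    · intro h k hk1 hkM
      rw [pS_eq i M k hkM]
      exact h k hk1 hkM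
    · intro h k hk1 hkM
      have := h k hk1 hkM
      rwa [pS_eq i M k hkM] at this
  have hZeq : ∀ M, ℙ {ω | ∀ k, 0 < k → k ≤ M → T X j k ω ≠ 0} = ℙ (Z0 M) := by
    intro M
    rw [hpre j M, hZ0]
    simp only
    rw [hpre 0 M]
    exact measV_shift hXmeas hXindep hXident j M _
  have hZ0meas : ∀ M, MeasurableSet (Z0 M) := by
    intro M
    rw [hZ0]
    simp only
    rw [hpre 0 M]
    exact (measV hXmeas 0 M) (Set.to_countable _).measurableSet
  have hmono : Antitone Z0 := by
    intro a b hab ω hω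
    exact fun k hk1 hka => hω k hk1 (le_trans hka hab)
  have hiInter : ⋂ M, Z0 M = (Rset X 0)ᶜ := by
    ext ω
    simp only [Set.mem_iInter, Set.mem_compl_iff, Rset, Set.mem_setOf_eq, hZ0]
    constructor
    · rintro h ⟨k, hk1, hTk⟩
      exact h k k hk1 le_rfl hTk
    · intro h M k hk1 _ hTk
      exact h ⟨k, hk1, hTk⟩
  have hcompl : ℙ ((Rset X 0)ᶜ) = 0 := by
    rw [measure_compl (measRset hXmeas 0) (measure_ne_top ℙ _),
      r_eq_one hXmeas hXindep hXident hint hmean, measure_univ, tsub_self]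
  have htend := tendsto_measure_iInter_atTop (μ := ℙ) (s := Z0)
    (fun M => (hZ0meas M).nullMeasurableSet) hmono ⟨0, measure_ne_top ℙ _⟩
  rw [hiInter, hcompl] at htend
  have hle : ∀ M, ℙ {ω | ∀ k, 0 < k → T X j k ω ≠ 0} ≤ ℙ (Z0 M) := by
    intro M
    rw [← hZeq M]
    apply measure_mono
    intro ω hω k hk1 _
    exact hω k hk1
  have := ge_of_tendsto' htend hle
  exact le_antisymm this zero_le

end CFaux

theorem stmt12 {Ω : Type*} [MeasureSpace Ω] [IsProbabilityMeasure (ℙ : Measure Ω)]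
    (X : ℕ → Ω → ℤ) (S : ℕ → Ω → ℤ)
    (hXmeas : ∀ n, Measurable (X n))
    (hXindep : iIndepFun X ℙ)
    (hXident : ∀ n, IdentDistrib (X n) (X 0) ℙ ℙ)
    (hint : Integrable (fun ω => ((X 0 ω : ℤ) : ℝ)) ℙ)
    (hmean : ∫ ω, ((X 0 ω : ℤ) : ℝ) ∂ℙ = 0)
    -- irreducibility: the support of the step distribution generates ℤ
    (hirr : ∀ x : ℤ, ∃ (n : ℕ) (f : Fin n → ℤ),
      (∀ i, 0 < ℙ {ω | X 0 ω = f i}) ∧ ∑ i, f i = x)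
    (hS0 : ∀ ω, S 0 ω = 0)
    (hstep : ∀ n ω, S (n + 1) ω = S n ω + X n ω) :
    ∀ᵐ ω ∂ℙ, {n : ℕ | S n ω = 0}.Infinite := by
  have hS : ∀ n ω, S n ω = CFaux.T X 0 n ω := by
    intro n
    induction n with
    | zero => intro ω; simp [CFaux.T, hS0]
    | succ n ih =>
      intro ω
      rw [hstep, ih]
      simp [CFaux.T, Finset.sum_range_succ]
  rw [MeasureTheory.ae_iff]
  apply measure_mono_null
    (t := ⋃ j, {ω : Ω | ∀ k, 0 < k → CFaux.T X j k ω ≠ 0})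
  · intro ω hω
    simp only [Set.mem_setOf_eq] at hω
    have hfin : Set.Finite {n : ℕ | S n ω = 0} := Set.not_infinite.1 hω
    have h0 : 0 ∈ {n : ℕ | S n ω = 0} := hS0 ω
    set j := sSup {n : ℕ | S n ω = 0} with hj
    have hjmem : j ∈ {n : ℕ | S n ω = 0} := Nat.sSup_mem ⟨0, h0⟩ hfin.bddAbove
    have hub : ∀ i ∈ {n : ℕ | S n ω = 0}, i ≤ j := fun i hi => le_csSup hfin.bddAbove hi
    simp only [Set.mem_iUnion, Set.mem_setOf_eq]
    refine ⟨j, fun k hk hTk => ?_⟩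
    have hsplit := CFaux.Tsplit (X := X) 0 j k ω
    rw [Nat.zero_add] at hsplit
    have hSjk : S (j + k) ω = 0 := by
      rw [hS, hsplit, hTk, ← hS]
      have : S j ω = 0 := hjmem
      omega
    have := hub (j + k) hSjk
    omega
  · exact measure_iUnion_null fun j =>
      CFaux.no_return_null hXmeas hXindep hXident hint hmean j
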